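/- Let l ≥ 0 be a real number, M ≥ 1 and R > 0 real numbers. Let (Q_k)_{k≥1} be a sequence of 2×2 complex matrices whose operator norms satisfy ‖Q_k‖ ≤ M·R^{−k} for all k ≥ 1, and let (χ_n)_{n≥0} be a sequence of vectors in ℂ² whose Euclidean norms satisfy, for every n ≥ 1, ‖χ_n‖ ≤ (1/(n(2l+1)))·Σ_{k=1}^{n} ‖Q_k‖·‖χ_{n−k}‖. Then ‖χ_n‖ ≤ M^n·R^{−n}·‖χ₀‖ for every n ≥ 0. -/

import Mathlib

open scoped Matrix.Norms.L2Operator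

/-- The key inductive bound on the Frobenius coefficients: if the matrix Taylor
coefficients satisfy `‖Q_k‖ ≤ M R^{-k}` and the vector coefficients satisfy
`‖χ_n‖ ≤ (1/(n(2l+1))) ∑_{k=1}^n ‖Q_k‖ ‖χ_{n-k}‖`, then
`‖χ_n‖ ≤ M^n R^{-n} ‖χ₀‖` for all `n`. -/
theorem frobenius_coefficient_bound
    (l M R : ℝ) (hl : 0 ≤ l) (hM : 1 ≤ M) (hR : 0 < R)
    (Q : ℕ → Matrix (Fin 2) (Fin 2) ℂ)
    (χ : ℕ → EuclideanSpace ℂ (Fin 2))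
    (hQ : ∀ k : ℕ, 1 ≤ k → ‖Q k‖ ≤ M * R ^ (-(k : ℤ)))
    (hχ : ∀ n : ℕ, 1 ≤ n →
      ‖χ n‖ ≤ (1 / (n * (2 * l + 1))) *
        ∑ k ∈ Finset.Icc 1 n, ‖Q k‖ * ‖χ (n - k)‖) :
    ∀ n : ℕ, ‖χ n‖ ≤ M ^ n * R ^ (-(n : ℤ)) * ‖χ 0‖ := by
  intro n
  induction n using Nat.strong_induction_on with
  | _ n ih =>
    rcases Nat.eq_zero_or_pos n with h0 | hn
    · subst h0; simp
    have hC : (0:ℝ) ≤ M ^ n * R ^ (-(n : ℤ)) * ‖χ 0‖ := by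
      positivity
    calc ‖χ n‖ ≤ (1 / (n * (2 * l + 1))) *
          ∑ k ∈ Finset.Icc 1 n, ‖Q k‖ * ‖χ (n - k)‖ := hχ n hn
      _ ≤ (1 / (n * (2 * l + 1))) *
          ∑ k ∈ Finset.Icc 1 n, (M ^ n * R ^ (-(n : ℤ)) * ‖χ 0‖) := by
          apply mul_le_mul_of_nonneg_left _ (by positivity)
          apply Finset.sum_le_sum
          intro k hk
          rw [Finset.mem_Icc] at hk
          obtain ⟨hk1, hkn⟩ := hk
          have h1 : ‖Q k‖ * ‖χ (n - k)‖ ≤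
              (M * R ^ (-(k : ℤ))) * (M ^ (n - k) * R ^ (-((n - k : ℕ) : ℤ)) * ‖χ 0‖) := by
            apply mul_le_mul (hQ k hk1) (ih (n - k) (by omega)) (norm_nonneg _) (by positivity)
          refine h1.trans ?_
          have hcast : ((n - k : ℕ) : ℤ) = (n : ℤ) - k := by
            push_cast [Nat.cast_sub hkn]; ring
          have hR' : R ≠ 0 := ne_of_gt hR
          have hRz : R ^ (-(k : ℤ)) * R ^ (-((n - k : ℕ) : ℤ)) = R ^ (-(n : ℤ)) := by
            rw [hcast, ← zpow_add₀ hR']; ring_nf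
          have hMz : M * M ^ (n - k) ≤ M ^ n := by
            calc M * M ^ (n - k) = M ^ (n - k + 1) := by ring
              _ ≤ M ^ n := pow_le_pow_right₀ hM (by omega)
          calc (M * R ^ (-(k : ℤ))) * (M ^ (n - k) * R ^ (-((n - k : ℕ) : ℤ)) * ‖χ 0‖)
              = (M * M ^ (n - k)) * (R ^ (-(k : ℤ)) * R ^ (-((n - k : ℕ) : ℤ))) * ‖χ 0‖ := by
                ring
            _ = (M * M ^ (n - k)) * R ^ (-(n : ℤ)) * ‖χ 0‖ := by rw [hRz]
            _ ≤ M ^ n * R ^ (-(n : ℤ)) * ‖χ 0‖ := by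
                apply mul_le_mul_of_nonneg_right _ (norm_nonneg _)
                exact mul_le_mul_of_nonneg_right hMz (by positivity)
      _ = (1 / (n * (2 * l + 1))) * (n * (M ^ n * R ^ (-(n : ℤ)) * ‖χ 0‖)) := by
          rw [Finset.sum_const, Nat.card_Icc]
          simp [nsmul_eq_mul]
      _ ≤ 1 * (M ^ n * R ^ (-(n : ℤ)) * ‖χ 0‖) := by
          rw [← mul_assoc]
          apply mul_le_mul_of_nonneg_right _ hC
          rw [div_mul_eq_mul_div, one_mul, div_le_one (by positivity)]
          have : (1:ℝ) ≤ n := by exact_mod_cast hn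
          nlinarith
      _ = M ^ n * R ^ (-(n : ℤ)) * ‖χ 0‖ := one_mul _
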